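/- Let $I = [a,b]$ with $a < b$, let $\mathcal{E}$ be a finite-dimensional real vector space, and let $\Upsilon \colon I \to \mathcal{E}$ be a real-analytic map. For $t \in I$, let $\mathcal{E}_t = \mathrm{span}\{\Upsilon^{(k)}(t) : k \geq 1\}$ be the span of all derivatives of $\Upsilon$ at $t$. Then $\mathcal{E}_s = \mathcal{E}_t$ for all $s, t \in I$, and this common subspace equals the smallest subspace $\mathcal{E}_0$ of $\mathcal{E}$ such that $\Upsilon(I) \subseteq \Upsilon(t_0) + \mathcal{E}_0$ for some (equivalently any) $t_0 \in I$. -/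

import Mathlib

open Set

private lemma aux_an_iter {E : Type*} [NormedAddCommGroup E] [NormedSpace ℝ E]
    [CompleteSpace E] {f : ℝ → E} {U : Set ℝ} (hf : AnalyticOnNhd ℝ f U) (n : ℕ) :
    AnalyticOnNhd ℝ (iteratedDeriv n f) U := by
  induction n with
  | zero => simpa using hf
  | succ n ih => rw [iteratedDeriv_succ]; exact ih.deriv

private lemma aux_comp {E F : Type*} [NormedAddCommGroup E] [NormedSpace ℝ E] [CompleteSpace E]
    [NormedAddCommGroup F] [NormedSpace ℝ F]
    {f : ℝ → E} {U : Set ℝ} (hU : IsOpen U) (hf : AnalyticOnNhd ℝ f U) (φ : E →L[ℝ] F) (n : ℕ) :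
    ∀ x ∈ U, iteratedDeriv n (fun y => φ (f y)) x = φ (iteratedDeriv n f x) := by
  induction n with
  | zero => intro x _; simp
  | succ n ih =>
    intro x hx
    rw [iteratedDeriv_succ, iteratedDeriv_succ]
    have h1 : (iteratedDeriv n fun y => φ (f y)) =ᶠ[nhds x] (fun y => φ (iteratedDeriv n f y)) :=
      Filter.eventuallyEq_of_mem (hU.mem_nhds hx) ih
    rw [h1.deriv_eq]
    have hd : HasDerivAt (iteratedDeriv n f) (deriv (iteratedDeriv n f) x) x :=
      ((aux_an_iter hf n) x hx).differentiableAt.hasDerivAt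
    exact ((φ.hasFDerivAt).comp_hasDerivAt x hd).deriv

private lemma aux_sub_const {F : Type*} [NormedAddCommGroup F] [NormedSpace ℝ F]
    (g : ℝ → F) (c : F) (m : ℕ) :
    iteratedDeriv (m + 1) (fun y => g y - c) = iteratedDeriv (m + 1) g := by
  have h : (deriv fun y => g y - c) = deriv g := by
    funext y
    exact deriv_sub_const (𝕜 := ℝ) c
  rw [iteratedDeriv_succ', iteratedDeriv_succ', h]

private lemma aux_ev_zero {f : ℝ → ℝ} {t : ℝ} (hf : AnalyticAt ℝ f t)
    (h0 : ∀ k, iteratedDeriv k f t = 0) : f =ᶠ[nhds t] 0 := by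
  obtain ⟨p, r, hp⟩ := hf
  have hz : ∀ y ∈ Metric.eball (0 : ℝ) r, f (t + y) = 0 := by
    intro y hy
    have hs := hp.hasSum_iteratedFDeriv hy
    have hco : ∀ n : ℕ, (n.factorial : ℝ)⁻¹ • iteratedFDeriv ℝ n f t (fun _ => y) = 0 := by
      intro n
      have h1 : iteratedFDeriv ℝ n f t (fun _ => y)
          = (∏ _i : Fin n, y) • iteratedFDeriv ℝ n f t (fun _ => (1 : ℝ)) := by
        rw [← ContinuousMultilinearMap.map_smul_univ]
        simp
      rw [h1, ← iteratedDeriv_eq_iteratedFDeriv, h0 n]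
      simp
    simp only [hco] at hs
    exact hs.unique hasSum_zero
  have hball : Metric.eball t r ∈ nhds t := Metric.eball_mem_nhds t hp.r_pos
  filter_upwards [hball] with x hx
  have hx' : x - t ∈ Metric.eball (0 : ℝ) r := by
    simp only [Metric.mem_eball] at hx ⊢
    simpa [edist_dist, dist_eq_norm] using hx
  simpa using hz (x - t) hx'

private lemma aux_prop {f : ℝ → ℝ} {C : Set ℝ} (hC : IsOpen C) (hCp : IsPreconnected C)
    (hf : AnalyticOnNhd ℝ f C) {t : ℝ} (ht : t ∈ C) (h0 : ∀ k, iteratedDeriv k f t = 0) :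
    ∀ s ∈ C, ∀ k, iteratedDeriv k f s = 0 := by
  have hzero : EqOn f 0 C :=
    hf.eqOn_zero_of_preconnected_of_eventuallyEq_zero hCp ht (aux_ev_zero (hf t ht) h0)
  intro s hs k
  have hev : f =ᶠ[nhds s] 0 := Filter.eventuallyEq_of_mem (hC.mem_nhds hs) hzero
  rw [hev.iteratedDeriv_eq k]
  have : iteratedDeriv k (0 : ℝ → ℝ) = 0 := by
    induction k with
    | zero => rfl
    | succ n ih =>
      rw [iteratedDeriv_succ, ih]
      have h2 : (0 : ℝ → ℝ) = fun _ => (0:ℝ) := rfl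
      funext y
      rw [h2]
      simp
  simp [this]

private lemma aux_dual {E : Type*} [AddCommGroup E] [Module ℝ E] (p : Submodule ℝ E) (v : E)
    (h : ∀ φ : E →ₗ[ℝ] ℝ, (∀ x ∈ p, φ x = 0) → φ v = 0) : v ∈ p := by
  rw [← Submodule.Quotient.mk_eq_zero]
  refine (Module.forall_dual_apply_eq_zero_iff ℝ _).mp fun ψ => ?_
  have := h (ψ ∘ₗ p.mkQ) (fun x hx => by
    simp [Submodule.mkQ_apply, (Submodule.Quotient.mk_eq_zero p).mpr hx])
  simpa using this

/-- §2.1 of the paper: for a real-analytic map `Υ : I → E` on a compact interval `I = [a,b]`,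
the span `E_t` of all derivatives `Υ^{(k)}(t)`, `k ≥ 1`, is the same subspace for all
`t ∈ I`, and it equals the smallest subspace `E₀` with `Υ(I) ⊆ Υ(t₀) + E₀`. -/
theorem analytic_derivative_span_constant
    (E : Type*) [NormedAddCommGroup E] [NormedSpace ℝ E] [FiniteDimensional ℝ E]
    (a b : ℝ) (hab : a < b)
    (U : Set ℝ) (hU : IsOpen U) (hIU : Set.Icc a b ⊆ U)
    (Υ : ℝ → E) (hΥ : AnalyticOnNhd ℝ Υ U)
    (Esp : ℝ → Submodule ℝ E)
    (hEsp : ∀ t, Esp t = Submodule.span ℝ {w : E | ∃ k : ℕ, 1 ≤ k ∧ w = iteratedDeriv k Υ t}) :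
    (∀ s ∈ Set.Icc a b, ∀ t ∈ Set.Icc a b, Esp s = Esp t) ∧
    (∀ t₀ ∈ Set.Icc a b,
      (∀ t ∈ Set.Icc a b, Υ t - Υ t₀ ∈ Esp t₀) ∧
      (∀ E₀ : Submodule ℝ E, (∀ t ∈ Set.Icc a b, Υ t - Υ t₀ ∈ E₀) → Esp t₀ ≤ E₀)) := by
  have ha : a ∈ Set.Icc a b := ⟨le_refl a, hab.le⟩
  set C : Set ℝ := connectedComponentIn U a with hC
  have hCopen : IsOpen C := hU.connectedComponentIn
  have hCpre : IsPreconnected C := isPreconnected_connectedComponentIn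
  have hCU : C ⊆ U := connectedComponentIn_subset U a
  have hIC : Set.Icc a b ⊆ C :=
    isPreconnected_Icc.subset_connectedComponentIn ha hIU
  have hΥC : AnalyticOnNhd ℝ Υ C := fun x hx => hΥ x (hCU hx)
  -- the key claim
  have key : ∀ t₀ ∈ Set.Icc a b, ∀ φ : E →L[ℝ] ℝ, (∀ x ∈ Esp t₀, φ x = 0) →
      ∀ s ∈ Set.Icc a b,
        (∀ k : ℕ, 1 ≤ k → φ (iteratedDeriv k Υ s) = 0) ∧ φ (Υ s) = φ (Υ t₀) := by
    intro t₀ ht₀ φ hφ s hs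
    set f : ℝ → ℝ := fun y => φ (Υ y) - φ (Υ t₀) with hf
    have hfa : AnalyticOnNhd ℝ f C := by
      intro x hx
      exact ((φ.analyticAt _).comp (hΥC x hx)).sub analyticAt_const
    have hft₀ : ∀ k, iteratedDeriv k f t₀ = 0 := by
      intro k
      cases k with
      | zero => simp [hf]
      | succ m =>
        have h1 : iteratedDeriv (m + 1) f t₀
            = iteratedDeriv (m + 1) (fun y => φ (Υ y)) t₀ := by
          rw [hf, aux_sub_const]
        rw [h1, aux_comp hCopen hΥC φ (m + 1) t₀ (hIC ht₀)]
        refine hφ _ ?_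
        rw [hEsp t₀]
        exact Submodule.subset_span ⟨m + 1, Nat.succ_le_succ (Nat.zero_le m), rfl⟩
    have hall := aux_prop hCopen hCpre hfa (hIC ht₀) hft₀ s (hIC hs)
    constructor
    · intro k hk
      obtain ⟨m, rfl⟩ : ∃ m, k = m + 1 := ⟨k - 1, (Nat.succ_pred_eq_of_pos hk).symm⟩
      have h1 := hall (m + 1)
      rw [hf, aux_sub_const, aux_comp hCopen hΥC φ (m + 1) s (hIC hs)] at h1
      exact h1
    · have h0 := hall 0
      simp only [hf, iteratedDeriv_zero] at h0
      linarith
  -- consequences via duality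
  have hle : ∀ s ∈ Set.Icc a b, ∀ t ∈ Set.Icc a b, Esp s ≤ Esp t := by
    intro s hs t ht
    rw [hEsp s]
    refine Submodule.span_le.mpr ?_
    rintro w ⟨k, hk, rfl⟩
    refine aux_dual (Esp t) _ fun ψ hψ => ?_
    have hφ : ∀ x ∈ Esp t, (LinearMap.toContinuousLinearMap ψ) x = 0 := by
      intro x hx; simpa using hψ x hx
    have := (key t ht (LinearMap.toContinuousLinearMap ψ) hφ s hs).1 k hk
    simpa using this
  have hmem : ∀ t₀ ∈ Set.Icc a b, ∀ t ∈ Set.Icc a b, Υ t - Υ t₀ ∈ Esp t₀ := by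
    intro t₀ ht₀ t ht
    refine aux_dual (Esp t₀) _ fun ψ hψ => ?_
    have hφ : ∀ x ∈ Esp t₀, (LinearMap.toContinuousLinearMap ψ) x = 0 := by
      intro x hx; simpa using hψ x hx
    have := (key t₀ ht₀ (LinearMap.toContinuousLinearMap ψ) hφ t ht).2
    simp only [LinearMap.coe_toContinuousLinearMap'] at this
    rw [map_sub, this, sub_self]
  refine ⟨fun s hs t ht => le_antisymm (hle s hs t ht) (hle t ht s hs), fun t₀ ht₀ => ?_⟩
  refine ⟨hmem t₀ ht₀, ?_⟩
  intro E₀ hE₀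
  set g : ℝ → E := fun y => Υ y - Υ t₀ with hg
  have hga : AnalyticOnNhd ℝ g U := fun x hx => (hΥ x hx).sub analyticAt_const
  have hE₀closed : IsClosed (E₀ : Set E) := Submodule.closed_of_finiteDimensional E₀
  have hind : ∀ n : ℕ, ∀ t ∈ Set.Icc a b, iteratedDeriv n g t ∈ E₀ := by
    intro n
    induction n with
    | zero => intro t ht; simpa [hg] using hE₀ t ht
    | succ n ih =>
      intro t ht
      rw [iteratedDeriv_succ]
      set G : ℝ → E := iteratedDeriv n g with hG
      have hGd : HasDerivAt G (deriv G t) t :=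
        ((aux_an_iter hga n) t (hIU ht)).differentiableAt.hasDerivAt
      have hslope := hasDerivAt_iff_tendsto_slope.mp hGd
      -- restrict to the filter within Icc a b \ {t}
      have hsub : Set.Icc a b \ {t} ⊆ {t}ᶜ := fun x hx => hx.2
      have hne : (nhdsWithin t (Set.Icc a b \ {t})).NeBot := by
        rcases lt_or_ge t b with h | h
        · have h1 : Set.Ioc t b ⊆ Set.Icc a b \ {t} := fun x hx =>
            ⟨⟨ht.1.trans hx.1.le, hx.2⟩, by simp [hx.1.ne']⟩
          exact (left_nhdsWithin_Ioc_neBot h).mono (nhdsWithin_mono t h1)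
        · have htb : t = b := le_antisymm ht.2 h
          have h1 : Set.Ico a t ⊆ Set.Icc a b \ {t} := fun x hx =>
            ⟨⟨hx.1, hx.2.le.trans ht.2⟩, by simp [hx.2.ne]⟩
          have hat : a < t := htb ▸ hab
          exact (right_nhdsWithin_Ico_neBot hat).mono (nhdsWithin_mono t h1)
      have htend : Filter.Tendsto (slope G t) (nhdsWithin t (Set.Icc a b \ {t}))
          (nhds (deriv G t)) := hslope.mono_left (nhdsWithin_mono t hsub)
      refine hE₀closed.mem_of_tendsto htend ?_
      filter_upwards [self_mem_nhdsWithin] with x hx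
      rw [slope_def_module]
      exact E₀.smul_mem _ (E₀.sub_mem (ih x hx.1) (ih t ht))
  have hmem' : ∀ k : ℕ, 1 ≤ k → iteratedDeriv k Υ t₀ ∈ E₀ := by
    intro k hk
    obtain ⟨m, rfl⟩ : ∃ m, k = m + 1 := ⟨k - 1, (Nat.succ_pred_eq_of_pos hk).symm⟩
    have := hind (m + 1) t₀ ht₀
    rwa [hg, aux_sub_const] at this
  rw [hEsp t₀]
  refine Submodule.span_le.mpr ?_
  rintro w ⟨k, hk, rfl⟩
  exact hmem' k hk
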